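/- arXiv:1610.07968 — 4 statements merged into one kernel-verified Lean document; each statement's English description precedes it below -/
import Mathlib

section
/- The quotient ring ℤ[c, c̄₁, …, c̄_{n-1}]/(relations from (1+c)(1+c̄₁+⋯+c̄_{n-1}) = 1, graded with deg c = 2, deg c̄ᵢ = 2i) is isomorphic as a ring to ℤ[c]/(cⁿ). Concretely: in ℤ[c][c̄₁,…,c̄_{n-1}], the ideal generated by the homogeneous components of degrees 1 through n of the product (1+c)(1+c̄₁+⋯+c̄_{n-1}) − 1 yields a quotient isomorphic to ℤ[c]/(cⁿ). -/
open MvPolynomial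

/-- The `j`-th complementary Chern generator of `ℂP^{n-1}`:
`gCP n 0 = 1` (the class `c̄₀`), `gCP n j = c̄ⱼ = X j` for `1 ≤ j ≤ n-1`,
and `0` for `j ≥ n`.  The variable `X ⟨0,_⟩` plays the role of `c`. -/
noncomputable def gCP (n : ℕ) (j : ℕ) : MvPolynomial (Fin n) ℤ :=
  if j = 0 then 1 else if h : j < n then X ⟨j, h⟩ else 0

/-- The quotient of `ℤ[c, c̄₁, …, c̄_{n-1}]` by the ideal generated by the
homogeneous components of degrees `1, …, n` of `(1+c)(1+c̄₁+⋯+c̄_{n-1}) - 1`,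
namely the elements `c̄ⱼ + c·c̄_{j-1}` for `1 ≤ j ≤ n`, is isomorphic as a
ring to `ℤ[c]/(cⁿ)`. -/
theorem stmt0 (n : ℕ) (hn : 1 ≤ n) :
    Nonempty (
      (MvPolynomial (Fin n) ℤ ⧸ Ideal.span
        { p : MvPolynomial (Fin n) ℤ | ∃ j, 1 ≤ j ∧ j ≤ n ∧
            p = gCP n j + X (⟨0, hn⟩ : Fin n) * gCP n (j - 1) })
      ≃+*
      (Polynomial ℤ ⧸ Ideal.span {(Polynomial.X : Polynomial ℤ) ^ n})) := by
  obtain ⟨m, rfl⟩ : ∃ m, n = m + 1 := ⟨n - 1, by omega⟩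
  set x0 : MvPolynomial (Fin (m+1)) ℤ := X (⟨0, hn⟩ : Fin (m+1)) with hx0def
  set I : Ideal (MvPolynomial (Fin (m+1)) ℤ) := Ideal.span
      { p : MvPolynomial (Fin (m+1)) ℤ | ∃ j, 1 ≤ j ∧ j ≤ m+1 ∧
          p = gCP (m+1) j + x0 * gCP (m+1) (j - 1) } with hIdef
  set J : Ideal (Polynomial ℤ) := Ideal.span {(Polynomial.X : Polynomial ℤ) ^ (m+1)} with hJdef
  -- key lemma: gCP agrees with (-x0)^j mod I, for j < n
  have key : ∀ j, j < m+1 → gCP (m+1) j - (-x0)^j ∈ I := by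
    intro j
    induction j with
    | zero => intro _; simp [gCP]
    | succ k ih =>
      intro hk
      have h1 : gCP (m+1) (k+1) + x0 * gCP (m+1) k ∈ I :=
        Ideal.subset_span ⟨k+1, by omega, by omega, by simp⟩
      have h2 : x0 * (gCP (m+1) k - (-x0)^k) ∈ I :=
        I.mul_mem_left _ (ih (by omega))
      have h3 := I.sub_mem h1 h2
      have heq : gCP (m+1) (k+1) + x0 * gCP (m+1) k - x0 * (gCP (m+1) k - (-x0)^k)
          = gCP (m+1) (k+1) - (-x0)^(k+1) := by ring
      rwa [heq] at h3
  have hxn : x0 ^ (m+1) ∈ I := by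
    have h1 : gCP (m+1) (m+1) + x0 * gCP (m+1) m ∈ I :=
      Ideal.subset_span ⟨m+1, by omega, le_refl _, by simp⟩
    have h0 : gCP (m+1) (m+1) = (0 : MvPolynomial (Fin (m+1)) ℤ) := by
      simp [gCP]
    have h2 : x0 * (gCP (m+1) m - (-x0)^m) ∈ I :=
      I.mul_mem_left _ (key m (by omega))
    have h3 := I.sub_mem h1 h2
    have heq : gCP (m+1) (m+1) + x0 * gCP (m+1) m - x0 * (gCP (m+1) m - (-x0)^m)
        = x0 * (-x0)^m := by rw [h0]; ring
    rw [heq] at h3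
    have h4 : ((-1 : MvPolynomial (Fin (m+1)) ℤ))^m * (x0 * (-x0)^m) ∈ I :=
      I.mul_mem_left _ h3
    have heq2 : ((-1 : MvPolynomial (Fin (m+1)) ℤ))^m * (x0 * (-x0)^m) = x0 ^ (m+1) := by
      rcases neg_one_pow_eq_or (MvPolynomial (Fin (m+1)) ℤ) m with h | h <;>
        rw [neg_pow x0 m, h, pow_succ] <;> ring
    rwa [heq2] at h4
  -- target rings
  set q : Polynomial ℤ ⧸ J := Ideal.Quotient.mk J Polynomial.X with hq
  have hqn : q ^ (m+1) = 0 := by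
    rw [hq, ← map_pow, Ideal.Quotient.eq_zero_iff_mem]
    exact Ideal.subset_span rfl
  -- forward hom
  set f : Fin (m+1) → Polynomial ℤ ⧸ J := fun i => if (i : ℕ) = 0 then q else (-q)^(i : ℕ)
    with hfdef
  set φ0 : MvPolynomial (Fin (m+1)) ℤ →+* Polynomial ℤ ⧸ J :=
    (eval₂Hom (Int.castRingHom _) f : MvPolynomial (Fin (m+1)) ℤ →+* Polynomial ℤ ⧸ J)
    with hφ0
  have hφx0 : φ0 x0 = q := by simp [hφ0, hx0def, hfdef]
  have hφg : ∀ j, 1 ≤ j → j ≤ m + 1 → φ0 (gCP (m+1) j) = if j = m+1 then 0 else (-q)^j := by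
    intro j hj1 hj2
    by_cases hj : j = m + 1
    · simp [gCP, hj, show ¬ (m+1 = 0) by omega]
    · have hjlt : j < m + 1 := by omega
      simp [gCP, show ¬ j = 0 by omega, hjlt, hj, hφ0, hfdef, show ¬ j = 0 by omega]
  have hker : ∀ p ∈ ({ p : MvPolynomial (Fin (m+1)) ℤ | ∃ j, 1 ≤ j ∧ j ≤ m+1 ∧
          p = gCP (m+1) j + x0 * gCP (m+1) (j - 1) } : Set _), φ0 p = 0 := by
    rintro p ⟨j, hj1, hj2, rfl⟩
    rw [map_add, map_mul, hφx0, hφg j hj1 hj2]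
    by_cases hj0 : j = 1
    · subst hj0
      have : gCP (m+1) 0 = 1 := by simp [gCP]
      rw [this, map_one]
      by_cases hm : m = 0
      · subst hm; simpa using hqn
      · simp [show (1:ℕ) ≠ m+1 by omega, hm]
    · have h1 : 1 ≤ j - 1 := by omega
      have h2 : j - 1 ≤ m + 1 := by omega
      have h3 : j - 1 ≠ m + 1 := by omega
      rw [hφg (j-1) h1 h2, if_neg h3]
      by_cases hj : j = m + 1
      · rw [if_pos hj, zero_add]
        have : j - 1 = m := by omega
        rw [this]
        have hq2 : q * (-q)^m = (-1)^m * q^(m+1) := by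
          rcases neg_one_pow_eq_or (Polynomial ℤ ⧸ J) m with h | h <;>
            rw [neg_pow q m, h, pow_succ] <;> ring
        rw [hq2, hqn, mul_zero]
      · rw [if_neg hj]
        obtain ⟨k, rfl⟩ : ∃ k, j = k + 2 := ⟨j - 2, by omega⟩
        have hk : k + 2 - 1 = k + 1 := rfl
        rw [hk, pow_succ (-q) (k+1)]
        ring
  set φ : (MvPolynomial (Fin (m+1)) ℤ ⧸ I) →+* Polynomial ℤ ⧸ J :=
    Ideal.Quotient.lift I φ0 (fun a ha => by
      have : I ≤ RingHom.ker φ0 := Ideal.span_le.mpr (fun p hp => SetLike.mem_coe.mpr (RingHom.mem_ker.mpr (hker p hp)))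
      exact RingHom.mem_ker.mp (this ha)) with hφ
  -- backward hom
  set mkI : MvPolynomial (Fin (m+1)) ℤ →+* MvPolynomial (Fin (m+1)) ℤ ⧸ I :=
    Ideal.Quotient.mk I with hmkI
  set ψ0 : Polynomial ℤ →+* MvPolynomial (Fin (m+1)) ℤ ⧸ I :=
    Polynomial.eval₂RingHom (Int.castRingHom _) (mkI x0) with hψ0
  have hψ0X : ψ0 Polynomial.X = mkI x0 := by simp [hψ0]
  set ψ : (Polynomial ℤ ⧸ J) →+* MvPolynomial (Fin (m+1)) ℤ ⧸ I :=
    Ideal.Quotient.lift J ψ0 (fun a ha => by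
      have hle : J ≤ RingHom.ker ψ0 := by
        rw [hJdef, Ideal.span_le, Set.singleton_subset_iff]
        rw [SetLike.mem_coe, RingHom.mem_ker]
        rw [map_pow, hψ0X, ← map_pow, hmkI, Ideal.Quotient.eq_zero_iff_mem]
        exact hxn
      exact RingHom.mem_ker.mp (hle ha)) with hψ
  refine ⟨RingEquiv.ofRingHom φ ψ ?_ ?_⟩
  · -- φ ∘ ψ = id on Polynomial ℤ ⧸ J
    apply Ideal.Quotient.ringHom_ext
    apply Polynomial.ringHom_ext'
    · ext z; simp
    · show (φ.comp ψ).comp (Ideal.Quotient.mk J) Polynomial.X = _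
      simp only [RingHom.comp_apply]
      rw [show (Ideal.Quotient.mk J) Polynomial.X = q from rfl]
      have h1 : ψ q = mkI x0 := by
        rw [hψ, hq, Ideal.Quotient.lift_mk]; exact hψ0X
      rw [h1]
      have h2 : φ (mkI x0) = q := by
        rw [hφ, hmkI, Ideal.Quotient.lift_mk]; exact hφx0
      rw [h2]
      rfl
  · -- ψ ∘ φ = id on quotient of MvPolynomial
    apply Ideal.Quotient.ringHom_ext
    apply MvPolynomial.ringHom_ext
    · intro z
      simp
    · intro i
      show (ψ.comp φ).comp (Ideal.Quotient.mk I) (X i) = Ideal.Quotient.mk I (X i)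
      simp only [RingHom.comp_apply]
      have hφX : φ (Ideal.Quotient.mk I (X i)) = f i := by
        rw [hφ]
        rw [Ideal.Quotient.lift_mk]
        simp [hφ0]
      rw [hφX]
      by_cases hi : (i : ℕ) = 0
      · have hieq : i = (⟨0, hn⟩ : Fin (m+1)) := by ext; exact hi
        have hfi : f i = q := by simp only [hfdef]; rw [if_pos hi]
        have h1 : ψ q = mkI x0 := by
          rw [hψ, hq, Ideal.Quotient.lift_mk]; exact hψ0X
        rw [hfi, h1, hieq, hmkI, hx0def]
      · have hfi : f i = (-q)^(i : ℕ) := by simp only [hfdef]; rw [if_neg hi]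
        rw [hfi, map_pow, map_neg]
        have h1 : ψ q = mkI x0 := by
          rw [hψ, hq, Ideal.Quotient.lift_mk]; exact hψ0X
        rw [h1]
        have : (-(mkI x0))^(i:ℕ) = mkI ((-x0)^(i:ℕ)) := by
          rw [map_pow, map_neg]
        rw [this, hmkI]
        rw [Ideal.Quotient.mk_eq_mk_iff_sub_mem]
        have hg : gCP (m+1) (i:ℕ) = X i := by
          simp [gCP, hi, i.isLt]
        have := key (i:ℕ) i.isLt
        rw [hg] at this
        have heq : (-x0)^(i:ℕ) - X i = -(X i - (-x0)^(i:ℕ)) := by ring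
        rw [heq]
        exact I.neg_mem this
end

section
/- In the graded ℚ-algebra A = ℚ[e, ē]/(e^{2n−1}, e·ē, ē² − (−1)^{n−1}e^{2n−2}) with deg e = 2, deg ē = 2n−2 (n ≥ 2), the elements 1, e, e², …, e^{2n−2}, ē form a ℚ-vector space basis; in particular dim_ℚ A = 2n. -/
open MvPolynomial

/-- The relations ideal of `H^*(G̃₂(ℝ^{2n}); ℚ) = ℚ[e,ē]/(e^{2n-1}, e·ē, ē² - (-1)^{n-1} e^{2n-2})`,
with `e = X 0` and `ē = X 1`. -/
noncomputable def orGrassIdeal (n : ℕ) : Ideal (MvPolynomial (Fin 2) ℚ) :=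
  Ideal.span
    ({X 0 ^ (2 * n - 1), X 0 * X 1,
      X 1 ^ 2 - (-1 : MvPolynomial (Fin 2) ℚ) ^ (n - 1) * X 0 ^ (2 * n - 2)} :
      Set (MvPolynomial (Fin 2) ℚ))

namespace OrGrassAux

/-- coefficient extraction as a `ℚ`-linear map -/
noncomputable def lc (m : Fin 2 →₀ ℕ) : MvPolynomial (Fin 2) ℚ →ₗ[ℚ] ℚ where
  toFun := coeff m
  map_add' p q := coeff_add m p q
  map_smul' c p := coeff_smul m c p

@[simp] lemma lc_apply (m : Fin 2 →₀ ℕ) (p : MvPolynomial (Fin 2) ℚ) :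
    lc m p = coeff m p := rfl

/-- the coordinate map -/
noncomputable def L (n : ℕ) : MvPolynomial (Fin 2) ℚ →ₗ[ℚ] (Fin (2 * n) → ℚ) :=
  LinearMap.pi fun i =>
    if (i : ℕ) < 2 * n - 1 then
      lc (Finsupp.single 0 (i : ℕ)) +
        (if (i : ℕ) = 2 * n - 2 then ((-1 : ℚ) ^ (n - 1)) • lc (Finsupp.single 1 2) else 0)
    else lc (Finsupp.single 1 1)

/-- the candidate basis representatives -/
noncomputable def pf (n : ℕ) : Fin (2 * n) → MvPolynomial (Fin 2) ℚ := fun i =>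
  if (i : ℕ) < 2 * n - 1 then X 0 ^ (i : ℕ) else X 1

lemma fneq {d1 d2 : Fin 2 →₀ ℕ} (j : Fin 2) (h : ¬ d1 j = d2 j) : ¬ d1 = d2 :=
  fun e => h (by rw [e])

lemma fin2decomp (m : Fin 2 →₀ ℕ) :
    m = Finsupp.single 0 (m 0) + Finsupp.single 1 (m 1) := by
  ext j
  fin_cases j <;> simp [Finsupp.single_apply]

lemma Xm (i : Fin 2) : (X i : MvPolynomial (Fin 2) ℚ) = monomial (Finsupp.single i 1) 1 := by
  rw [← X_pow_eq_monomial, pow_one]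

lemma L_vanish (n : ℕ) (hn : 2 ≤ n) {x : MvPolynomial (Fin 2) ℚ}
    (hx : x ∈ orGrassIdeal n) : L n x = 0 := by
  have key : ∀ g ∈ ({X 0 ^ (2 * n - 1), X 0 * X 1,
      X 1 ^ 2 - (-1 : MvPolynomial (Fin 2) ℚ) ^ (n - 1) * X 0 ^ (2 * n - 2)} :
      Set (MvPolynomial (Fin 2) ℚ)), ∀ q : MvPolynomial (Fin 2) ℚ, L n (q * g) = 0 := by
    intro g hg q
    induction q using MvPolynomial.induction_on' with
    | add p q hp hq => rw [add_mul, map_add, hp, hq, add_zero]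
    | monomial m c =>
      simp only [Set.mem_insert_iff, Set.mem_singleton_iff] at hg
      funext j
      rcases hg with hg | hg | hg
      · subst hg
        rw [X_pow_eq_monomial, monomial_mul]
        simp only [L, LinearMap.pi_apply, Pi.zero_apply]
        split_ifs with h1 h2
        · have hA : ¬ (m + Finsupp.single (0 : Fin 2) (2 * n - 1)
              = Finsupp.single (0 : Fin 2) (j : ℕ)) :=
            fneq 0 (by simp [Finsupp.single_apply]; omega)
          have hB : ¬ (m + Finsupp.single (0 : Fin 2) (2 * n - 1)
              = Finsupp.single (1 : Fin 2) 2) :=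
            fneq 0 (by simp [Finsupp.single_apply]; omega)
          simp only [LinearMap.add_apply, LinearMap.smul_apply, lc_apply, coeff_monomial]
          rw [if_neg hA, if_neg hB]
          simp
        · have hA : ¬ (m + Finsupp.single (0 : Fin 2) (2 * n - 1)
              = Finsupp.single (0 : Fin 2) (j : ℕ)) :=
            fneq 0 (by simp [Finsupp.single_apply]; omega)
          simp only [LinearMap.add_apply, LinearMap.zero_apply, lc_apply, coeff_monomial]
          rw [if_neg hA]
          simp
        · have hA : ¬ (m + Finsupp.single (0 : Fin 2) (2 * n - 1)
              = Finsupp.single (1 : Fin 2) 1) :=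
            fneq 0 (by simp [Finsupp.single_apply]; omega)
          simp only [lc_apply, coeff_monomial]
          rw [if_neg hA]
      · subst hg
        rw [Xm, Xm, monomial_mul, monomial_mul]
        simp only [L, LinearMap.pi_apply, Pi.zero_apply]
        split_ifs with h1 h2
        · have hA : ¬ (m + (Finsupp.single (0 : Fin 2) 1 + Finsupp.single (1 : Fin 2) 1)
              = Finsupp.single (0 : Fin 2) (j : ℕ)) :=
            fneq 1 (by simp [Finsupp.single_apply])
          have hB : ¬ (m + (Finsupp.single (0 : Fin 2) 1 + Finsupp.single (1 : Fin 2) 1)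
              = Finsupp.single (1 : Fin 2) 2) :=
            fneq 0 (by simp [Finsupp.single_apply])
          simp only [LinearMap.add_apply, LinearMap.smul_apply, lc_apply, coeff_monomial]
          rw [if_neg hA, if_neg hB]
          simp
        · have hA : ¬ (m + (Finsupp.single (0 : Fin 2) 1 + Finsupp.single (1 : Fin 2) 1)
              = Finsupp.single (0 : Fin 2) (j : ℕ)) :=
            fneq 1 (by simp [Finsupp.single_apply])
          simp only [LinearMap.add_apply, LinearMap.zero_apply, lc_apply, coeff_monomial]
          rw [if_neg hA]
          simp
        · have hA : ¬ (m + (Finsupp.single (0 : Fin 2) 1 + Finsupp.single (1 : Fin 2) 1)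
              = Finsupp.single (1 : Fin 2) 1) :=
            fneq 0 (by simp [Finsupp.single_apply])
          simp only [lc_apply, coeff_monomial]
          rw [if_neg hA]
      · subst hg
        have hC : ((-1 : MvPolynomial (Fin 2) ℚ) ^ (n - 1)) = C ((-1 : ℚ) ^ (n - 1)) := by
          rw [map_pow, map_neg, map_one]
        rw [mul_sub, hC, show (monomial m) c * (C ((-1:ℚ)^(n-1)) * X 0 ^ (2*n-2))
            = ((-1:ℚ)^(n-1)) • ((monomial m) c * X 0 ^ (2*n-2)) by
          rw [smul_eq_C_mul]; ring]
        rw [map_sub, map_smul]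
        rw [show ((X 1 : MvPolynomial (Fin 2) ℚ) ^ 2) = monomial (Finsupp.single 1 2) 1 from
          X_pow_eq_monomial, X_pow_eq_monomial, monomial_mul, monomial_mul]
        simp only [L, LinearMap.pi_apply, Pi.sub_apply, Pi.smul_apply, Pi.zero_apply]
        split_ifs with h1 h2
        · -- j < 2n-1, j = 2n-2
          rw [h2]
          have hA : ¬ (m + Finsupp.single (1 : Fin 2) 2
              = Finsupp.single (0 : Fin 2) (2 * n - 2)) :=
            fneq 1 (by simp [Finsupp.single_apply])
          have hB : ¬ (m + Finsupp.single (0 : Fin 2) (2 * n - 2)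
              = Finsupp.single (1 : Fin 2) 2) :=
            fneq 0 (by simp [Finsupp.single_apply]; omega)
          simp only [LinearMap.add_apply, LinearMap.smul_apply, lc_apply, coeff_monomial]
          rw [if_neg hA, if_neg hB]
          by_cases hm : m = 0
          · subst hm
            rw [if_pos (zero_add _), if_pos (zero_add _)]
            simp only [smul_eq_mul, mul_one, mul_zero, add_zero, zero_add]
            ring
          · rw [if_neg (fun h => hm (add_eq_right.mp h)),
              if_neg (fun h => hm (add_eq_right.mp h))]
            simp
        · -- j < 2n-1, j ≠ 2n-2
          have hA : ¬ (m + Finsupp.single (1 : Fin 2) 2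
              = Finsupp.single (0 : Fin 2) (j : ℕ)) :=
            fneq 1 (by simp [Finsupp.single_apply])
          have hB : ¬ (m + Finsupp.single (0 : Fin 2) (2 * n - 2)
              = Finsupp.single (0 : Fin 2) (j : ℕ)) :=
            fneq 0 (by simp [Finsupp.single_apply]; omega)
          simp only [LinearMap.add_apply, LinearMap.zero_apply, lc_apply, coeff_monomial]
          rw [if_neg hA, if_neg hB]
          simp
        · -- j = 2n-1
          have hA : ¬ (m + Finsupp.single (1 : Fin 2) 2
              = Finsupp.single (1 : Fin 2) 1) :=
            fneq 1 (by simp [Finsupp.single_apply])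
          have hB : ¬ (m + Finsupp.single (0 : Fin 2) (2 * n - 2)
              = Finsupp.single (1 : Fin 2) 1) :=
            fneq 0 (by simp [Finsupp.single_apply]; omega)
          simp only [lc_apply, coeff_monomial]
          rw [if_neg hA, if_neg hB]
          simp
  have main : ∀ q : MvPolynomial (Fin 2) ℚ, L n (q * x) = 0 := by
    refine Submodule.span_induction (p := fun x _ => ∀ q, L n (q * x) = 0)
      (fun g hg q => key g hg q) (by simp) ?_ ?_ hx
    · intro a b _ _ ha hb q
      rw [mul_add, map_add, ha, hb, add_zero]
    · intro a y _ hy q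
      rw [smul_eq_mul, ← mul_assoc]
      exact hy (q * a)
  simpa using main 1

lemma L_basis (n : ℕ) (hn : 2 ≤ n) (i j : Fin (2 * n)) :
    L n (pf n i) j = if i = j then 1 else 0 := by
  have hij : (i = j) ↔ ((i : ℕ) = (j : ℕ)) := Fin.ext_iff
  simp only [L, pf, LinearMap.pi_apply]
  by_cases h1 : (i : ℕ) < 2 * n - 1
  · rw [if_pos h1, X_pow_eq_monomial]
    by_cases h2 : (j : ℕ) < 2 * n - 1
    · rw [if_pos h2]
      have hB : ¬ (Finsupp.single (0 : Fin 2) (i : ℕ) = Finsupp.single (1 : Fin 2) 2) :=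
        fneq 1 (by simp [Finsupp.single_apply])
      by_cases hc : i = j
      · subst hc
        by_cases h3 : (i : ℕ) = 2 * n - 2
        · rw [if_pos h3]
          simp only [LinearMap.add_apply, LinearMap.smul_apply, lc_apply, coeff_monomial]
          rw [if_neg hB]
          simp
        · rw [if_neg h3]
          simp only [LinearMap.add_apply, LinearMap.zero_apply, lc_apply, coeff_monomial]
          simp
      · have hA : ¬ (Finsupp.single (0 : Fin 2) (i : ℕ) = Finsupp.single (0 : Fin 2) (j : ℕ)) :=
          fun h => hc (Fin.ext ((Finsupp.single_injective (0 : Fin 2)).eq_iff.mp h))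
        by_cases h3 : (j : ℕ) = 2 * n - 2
        · rw [if_pos h3]
          simp only [LinearMap.add_apply, LinearMap.smul_apply, lc_apply, coeff_monomial]
          rw [if_neg hA, if_neg hB, if_neg hc]
          simp
        · rw [if_neg h3]
          simp only [LinearMap.add_apply, LinearMap.zero_apply, lc_apply, coeff_monomial]
          rw [if_neg hA, if_neg hc]
          simp
    · rw [if_neg h2]
      have hA : ¬ (Finsupp.single (0 : Fin 2) (i : ℕ) = Finsupp.single (1 : Fin 2) 1) :=
        fneq 1 (by simp [Finsupp.single_apply])
      simp only [lc_apply, coeff_monomial]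
      rw [if_neg hA, if_neg (fun h : i = j => h2 (h ▸ h1))]
  · rw [if_neg h1, Xm]
    by_cases h2 : (j : ℕ) < 2 * n - 1
    · rw [if_pos h2]
      have hA : ¬ (Finsupp.single (1 : Fin 2) 1 = Finsupp.single (0 : Fin 2) (j : ℕ)) :=
        fneq 1 (by simp [Finsupp.single_apply])
      have hB : ¬ (Finsupp.single (1 : Fin 2) 1 = Finsupp.single (1 : Fin 2) 2) :=
        fneq 1 (by simp [Finsupp.single_apply])
      have hc : ¬ (i = j) := fun h => h1 (by rw [h]; exact h2)
      by_cases h3 : (j : ℕ) = 2 * n - 2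
      · rw [if_pos h3]
        simp only [LinearMap.add_apply, LinearMap.smul_apply, lc_apply, coeff_monomial]
        rw [if_neg hA, if_neg hB, if_neg hc]
        simp
      · rw [if_neg h3]
        simp only [LinearMap.add_apply, LinearMap.zero_apply, lc_apply, coeff_monomial]
        rw [if_neg hA, if_neg hc]
        simp
    · rw [if_neg h2]
      have hc : i = j := Fin.ext (by have := i.isLt; have := j.isLt; omega)
      simp only [lc_apply, coeff_monomial]
      simp [hc]

lemma mem_span_pow (n : ℕ) (hn : 2 ≤ n) (a b : ℕ) :
    Ideal.Quotient.mk (orGrassIdeal n) (X 0 ^ a * X 1 ^ b) ∈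
      Submodule.span ℚ
        (Set.range fun i => Ideal.Quotient.mk (orGrassIdeal n) (pf n i)) := by
  set I := orGrassIdeal n with hI
  set S := Submodule.span ℚ
    (Set.range fun i => Ideal.Quotient.mk (orGrassIdeal n) (pf n i)) with hS
  have g1mem : (X 0 ^ (2 * n - 1) : MvPolynomial (Fin 2) ℚ) ∈ I :=
    Ideal.subset_span (by simp)
  have g2mem : (X 0 * X 1 : MvPolynomial (Fin 2) ℚ) ∈ I :=
    Ideal.subset_span (by simp)
  have g3mem : (X 1 ^ 2 - (-1 : MvPolynomial (Fin 2) ℚ) ^ (n - 1) * X 0 ^ (2 * n - 2)) ∈ I :=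
    Ideal.subset_span (by simp)
  have hzero : ∀ r : MvPolynomial (Fin 2) ℚ,
      Ideal.Quotient.mk I (X 0 * X 1 * r) = 0 := fun r => by
    rw [Ideal.Quotient.eq_zero_iff_mem]
    exact Ideal.mul_mem_right r _ g2mem
  have hvmem : ∀ i : Fin (2 * n), Ideal.Quotient.mk I (pf n i) ∈ S := fun i =>
    Submodule.subset_span ⟨i, rfl⟩
  have hx0 : ∀ k : ℕ, k ≤ 2 * n - 2 → Ideal.Quotient.mk I (X 0 ^ k) ∈ S := by
    intro k hk
    have hi : k < 2 * n := by omega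
    have hpf : pf n ⟨k, hi⟩ = X 0 ^ k := by
      simp only [pf, Fin.val_mk]
      rw [if_pos (by omega)]
    rw [← hpf]
    exact hvmem _
  by_cases hb0 : b = 0
  · subst hb0
    rw [pow_zero, mul_one]
    by_cases ha : a ≤ 2 * n - 2
    · exact hx0 a ha
    · have heq : (X 0 ^ a : MvPolynomial (Fin 2) ℚ)
          = X 0 ^ (2 * n - 1) * X 0 ^ (a - (2 * n - 1)) := by
        rw [← pow_add]
        congr 1
        omega
      have hz : Ideal.Quotient.mk I (X 0 ^ a) = 0 := by
        rw [heq, Ideal.Quotient.eq_zero_iff_mem]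
        exact Ideal.mul_mem_right _ _ g1mem
      rw [hz]
      exact Submodule.zero_mem _
  · by_cases ha0 : a = 0
    · subst ha0
      rw [pow_zero, one_mul]
      by_cases hb1 : b = 1
      · subst hb1
        rw [pow_one]
        have hi : 2 * n - 1 < 2 * n := by omega
        have hpf : pf n ⟨2 * n - 1, hi⟩ = X 1 := by
          simp only [pf, Fin.val_mk]
          rw [if_neg (by omega)]
        rw [← hpf]
        exact hvmem _
      · -- b ≥ 2
        have hb2 : (X 1 ^ b : MvPolynomial (Fin 2) ℚ) = X 1 ^ (b - 2) * X 1 ^ 2 := by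
          rw [← pow_add]
          congr 1
          omega
        have hC : (C ((-1 : ℚ) ^ (n - 1)) : MvPolynomial (Fin 2) ℚ)
            = (-1 : MvPolynomial (Fin 2) ℚ) ^ (n - 1) := by
          rw [map_pow, map_neg, map_one]
        have hrel : Ideal.Quotient.mk I ((X 1 : MvPolynomial (Fin 2) ℚ) ^ 2)
            = ((-1 : ℚ) ^ (n - 1)) • Ideal.Quotient.mk I (X 0 ^ (2 * n - 2)) := by
          have h0 : Ideal.Quotient.mk I
              (X 1 ^ 2 - (-1 : MvPolynomial (Fin 2) ℚ) ^ (n - 1) * X 0 ^ (2 * n - 2)) = 0 :=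
            Ideal.Quotient.eq_zero_iff_mem.mpr g3mem
          rw [map_sub, sub_eq_zero] at h0
          rw [h0, ← hC, ← smul_eq_C_mul, ← Ideal.Quotient.mkₐ_eq_mk ℚ, map_smul]
        rw [hb2, map_mul, hrel, mul_comm, smul_mul_assoc, ← map_mul]
        apply Submodule.smul_mem
        by_cases hb3 : b = 2
        · subst hb3
          rw [show (2 : ℕ) - 2 = 0 from rfl, pow_zero, mul_one]
          exact hx0 _ le_rfl
        · -- b ≥ 3
          obtain ⟨k, hk⟩ : ∃ k, b - 2 = k + 1 := ⟨b - 3, by omega⟩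
          obtain ⟨l, hl⟩ : ∃ l, 2 * n - 2 = l + 1 := ⟨2 * n - 3, by omega⟩
          have heq : (X 0 ^ (2 * n - 2) * X 1 ^ (b - 2) : MvPolynomial (Fin 2) ℚ)
              = X 0 * X 1 * (X 1 ^ k * X 0 ^ l) := by
            rw [hk, hl, pow_succ, pow_succ]
            ring
          rw [heq, hzero]
          exact Submodule.zero_mem _
    · -- a ≥ 1, b ≥ 1
      obtain ⟨a', ha'⟩ : ∃ a', a = a' + 1 := ⟨a - 1, by omega⟩
      obtain ⟨b', hb'⟩ : ∃ b', b = b' + 1 := ⟨b - 1, by omega⟩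
      have heq : (X 0 ^ a * X 1 ^ b : MvPolynomial (Fin 2) ℚ)
          = X 0 * X 1 * (X 0 ^ a' * X 1 ^ b') := by
        rw [ha', hb', pow_succ, pow_succ]
        ring
      rw [heq, hzero]
      exact Submodule.zero_mem _

lemma span_top (n : ℕ) (hn : 2 ≤ n) :
    ⊤ ≤ Submodule.span ℚ
      (Set.range fun i => Ideal.Quotient.mk (orGrassIdeal n) (pf n i)) := by
  intro x hx
  clear hx
  obtain ⟨p, rfl⟩ := Ideal.Quotient.mk_surjective x
  induction p using MvPolynomial.induction_on' with
  | add p q hp hq =>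
    rw [map_add]
    exact Submodule.add_mem _ hp hq
  | monomial m c =>
    have key : (monomial m c : MvPolynomial (Fin 2) ℚ)
        = c • (X 0 ^ (m 0) * X 1 ^ (m 1)) := by
      rw [X_pow_eq_monomial, X_pow_eq_monomial, monomial_mul, one_mul, smul_eq_C_mul,
        C_mul_monomial, mul_one, ← fin2decomp m]
    rw [key, ← Ideal.Quotient.mkₐ_eq_mk ℚ, map_smul, Ideal.Quotient.mkₐ_eq_mk ℚ]
    exact Submodule.smul_mem _ c (mem_span_pow n hn (m 0) (m 1))

lemma lin_indep (n : ℕ) (hn : 2 ≤ n) :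
    LinearIndependent ℚ (fun i => Ideal.Quotient.mk (orGrassIdeal n) (pf n i)) := by
  rw [Fintype.linearIndependent_iff]
  intro g hg i
  have hmem : (∑ k, g k • pf n k) ∈ orGrassIdeal n := by
    rw [← Ideal.Quotient.eq_zero_iff_mem, ← Ideal.Quotient.mkₐ_eq_mk ℚ, map_sum]
    simp only [map_smul, Ideal.Quotient.mkₐ_eq_mk ℚ]
    exact hg
  have h2 := congrFun (L_vanish n hn hmem) i
  rw [map_sum] at h2
  simp only [map_smul, Finset.sum_apply, Pi.smul_apply, L_basis n hn, smul_eq_mul, mul_ite,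
    mul_one, mul_zero, Pi.zero_apply] at h2
  rwa [Finset.sum_ite_eq' Finset.univ i g, if_pos (Finset.mem_univ i)] at h2

end OrGrassAux

/-- In `A = ℚ[e,ē]/(e^{2n-1}, e·ē, ē² - (-1)^{n-1} e^{2n-2})` (n ≥ 2), the
elements `1, e, e², …, e^{2n-2}, ē` form a `ℚ`-basis; in particular
`dim_ℚ A = 2n`. -/
theorem stmt4 (n : ℕ) (hn : 2 ≤ n) :
    ∃ b : Module.Basis (Fin (2 * n)) ℚ (MvPolynomial (Fin 2) ℚ ⧸ orGrassIdeal n),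
      ∀ i : Fin (2 * n),
        b i = Ideal.Quotient.mk (orGrassIdeal n)
          (if (i : ℕ) < 2 * n - 1 then X 0 ^ (i : ℕ) else X 1) := by
  refine ⟨Module.Basis.mk (OrGrassAux.lin_indep n hn) (OrGrassAux.span_top n hn), fun i => ?_⟩
  rw [Module.Basis.mk_apply]
  rfl
end

section
/- In the graded ring ℤ[x₁,…,xₙ]/I, where I is generated by the elementary symmetric polynomials e₁(x), …, eₙ(x), every element of the maximal graded degree strictly above 2·(n(n−1)/2) vanishes when deg xᵢ = 2; equivalently, in the coinvariant algebra ℤ[x₁,…,xₙ]/(e₁,…,eₙ), all homogeneous elements of degree > n(n−1)/2 (in the standard grading deg xᵢ = 1) are zero. -/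
open MvPolynomial Finset

namespace Stmt10Aux

variable (n : ℕ)


noncomputable def I : Ideal (MvPolynomial (Fin n) ℤ) :=
  Ideal.span (Set.range fun j : Fin n => esymm (Fin n) ℤ ((j : ℕ) + 1))

lemma esymm_mem_I {k : ℕ} (h1 : 1 ≤ k) (h2 : k ≤ n) : esymm (Fin n) ℤ k ∈ I n := by
  apply Ideal.subset_span
  have hk : (k - 1) + 1 = k := by omega
  exact ⟨⟨k - 1, by omega⟩, by simp only [Fin.val_mk, hk]⟩




/-- variables with index `< i`. -/
def lowSet (i : ℕ) : Finset (Fin n) := Finset.univ.filter (fun j => (j : ℕ) < i)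

/-- partial elementary symmetric polynomial in variables `x₀,…,x_{i-1}`. -/
noncomputable def Ep (k i : ℕ) : MvPolynomial (Fin n) ℤ :=
  ∑ T ∈ (lowSet n i).powersetCard k, ∏ j ∈ T, X j

lemma lowSet_zero : lowSet n 0 = ∅ := by
  simp [lowSet]

lemma lowSet_succ {i : ℕ} (h : i < n) :
    lowSet n (i + 1) = insert ⟨i, h⟩ (lowSet n i) := by
  ext j
  simp only [lowSet, mem_filter, mem_univ, true_and, mem_insert, Fin.ext_iff]
  omega

lemma not_mem_lowSet {i : ℕ} (h : i < n) : (⟨i, h⟩ : Fin n) ∉ lowSet n i := by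
  simp [lowSet]

lemma lowSet_of_le {i : ℕ} (h : n ≤ i) : lowSet n i = Finset.univ := by
  ext j; simp only [lowSet, mem_filter, mem_univ, true_and, iff_true]
  exact lt_of_lt_of_le j.isLt h

lemma card_lowSet_le (i : ℕ) : (lowSet n i).card ≤ i := by
  classical
  have : (lowSet n i).card ≤ (Finset.range i).card :=
    Finset.card_le_card_of_injOn (fun j : Fin n => (j : ℕ))
      (fun j hj => by
        exact Finset.mem_range.2 (Finset.mem_filter.1 hj).2)
      (fun a _ b _ h => Fin.ext h)
  simpa using this

lemma Ep_zero (i : ℕ) : Ep n 0 i = 1 := by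
  simp [Ep]

lemma Ep_top {k i : ℕ} (hk : i < k) : Ep n k i = 0 := by
  have : (lowSet n i).powersetCard k = ∅ :=
    Finset.powersetCard_eq_empty.2 (lt_of_le_of_lt (card_lowSet_le n i) hk)
  simp [Ep, this]

lemma Ep_succ {i : ℕ} (h : i < n) (k : ℕ) :
    Ep n (k + 1) (i + 1) = Ep n (k + 1) i + X ⟨i, h⟩ * Ep n k i := by
  classical
  rw [Ep, lowSet_succ n h, Finset.powersetCard_succ_insert (not_mem_lowSet n h)]
  rw [Finset.sum_union]
  · congr 1
    rw [Finset.sum_image ?_, Ep, Finset.mul_sum]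
    · refine Finset.sum_congr rfl fun T hT => ?_
      rw [Finset.prod_insert fun hmem =>
        not_mem_lowSet n h ((Finset.mem_powersetCard.1 hT).1 hmem)]
    · intro a ha b hb hab
      have ha' := (Finset.mem_powersetCard.1 ha).1
      have hb' := (Finset.mem_powersetCard.1 hb).1
      have hi_a : (⟨i, h⟩ : Fin n) ∉ a := fun hmem => not_mem_lowSet n h (ha' hmem)
      have hi_b : (⟨i, h⟩ : Fin n) ∉ b := fun hmem => not_mem_lowSet n h (hb' hmem)
      have := congrArg (fun s => Finset.erase s (⟨i, h⟩ : Fin n)) hab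
      simpa [Finset.erase_insert, hi_a, hi_b] using this
  · rw [Finset.disjoint_right]
    intro T hT hT'
    simp only [Finset.mem_image] at hT
    obtain ⟨S, _, rfl⟩ := hT
    exact not_mem_lowSet n h ((Finset.mem_powersetCard.1 hT').1 (Finset.mem_insert_self _ _))

lemma Ep_n (k : ℕ) : Ep n k n = esymm (Fin n) ℤ k := by
  rw [Ep, lowSet_of_le n le_rfl, esymm]



noncomputable def Hp : ℕ → ℕ → MvPolynomial (Fin n) ℤ
  | 0, _ => 1
  | k + 1, i =>
    if h : i < n then X ⟨i, h⟩ * Hp k i + Hp (k + 1) (i + 1) else 0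
  termination_by k i => (k, n - i)
  decreasing_by
  · exact Prod.Lex.left _ _ (Nat.lt_succ_self k)
  · exact Prod.Lex.right _ (by omega)

lemma Hp_isHomogeneous : ∀ k i, (Hp n k i).IsHomogeneous k
  | 0, i => by rw [Hp]; exact isHomogeneous_one _ _
  | k + 1, i => by
    rw [Hp]
    split
    next h =>
      have h1 := (isHomogeneous_X ℤ (⟨i, h⟩ : Fin n)).mul (Hp_isHomogeneous k i)
      rw [add_comm] at h1
      exact h1.add (Hp_isHomogeneous (k + 1) (i + 1))
    next => exact isHomogeneous_zero _ _ _
  termination_by k i => (k, n - i)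
  decreasing_by
  · exact Prod.Lex.left _ _ (Nat.lt_succ_self k)
  · exact Prod.Lex.right _ (by omega)

lemma Hp_vars : ∀ k i, ∀ j ∈ (Hp n k i).vars, i ≤ (j : ℕ)
  | 0, i => by rw [Hp]; simp
  | k + 1, i => by
    rw [Hp]
    split
    next h =>
      intro j hj
      rcases Finset.mem_union.1 (vars_add_subset _ _ hj) with hj | hj
      · rcases Finset.mem_union.1 (vars_mul _ _ hj) with hj | hj
        · rw [vars_X] at hj
          simp only [Finset.mem_singleton] at hj
          subst hj; exact le_rfl
        · exact Hp_vars k i j hj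
      · exact le_trans (Nat.le_succ i) (Hp_vars (k + 1) (i + 1) j hj)
    next => simp
  termination_by k i => (k, n - i)
  decreasing_by
  · exact Prod.Lex.left _ _ (Nat.lt_succ_self k)
  · exact Prod.Lex.right _ (by omega)

lemma coeff_Hp_eq_zero {k i : ℕ} {b : Fin n →₀ ℕ} {j : Fin n}
    (hj : (j : ℕ) < i) (hb : b j ≠ 0) : coeff b (Hp n k i) = 0 := by
  by_contra hc
  have hjv : j ∈ (Hp n k i).vars :=
    (mem_vars j).2 ⟨b, mem_support_iff.2 hc, Finsupp.mem_support_iff.2 hb⟩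
  exact absurd (Hp_vars n k i j hjv) (by omega)

lemma Hp_coeff_single {i : ℕ} (h : i < n) :
    ∀ k, coeff (Finsupp.single (⟨i, h⟩ : Fin n) k) (Hp n k i) = 1
  | 0 => by rw [Hp]; simp
  | k + 1 => by
    rw [Hp, dif_pos h, coeff_add]
    have h2 : coeff (Finsupp.single (⟨i, h⟩ : Fin n) (k + 1)) (Hp n (k + 1) (i + 1)) = 0 :=
      coeff_Hp_eq_zero n (j := ⟨i, h⟩) (by simp) (by simp) 
    have h1 : coeff (Finsupp.single (⟨i, h⟩ : Fin n) (k + 1))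
        (X (⟨i, h⟩ : Fin n) * Hp n k i) = 1 := by
      have : (Finsupp.single (⟨i, h⟩ : Fin n) (k + 1))
          = Finsupp.single (⟨i, h⟩ : Fin n) 1 + Finsupp.single (⟨i, h⟩ : Fin n) k := by
        rw [← Finsupp.single_add, add_comm]
      rw [this, coeff_X_mul, Hp_coeff_single h k]
    rw [h1, h2, add_zero]


lemma Hp_mk : ∀ k i, Ideal.Quotient.mk (I n) (Hp n k i)
    = (-1) ^ k * Ideal.Quotient.mk (I n) (Ep n k i)
  | 0, i => by rw [Hp, Ep_zero]; simp
  | k + 1, i => by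
    rw [Hp]
    split
    next h =>
      rw [map_add, map_mul, Hp_mk k i, Hp_mk (k + 1) (i + 1), Ep_succ n h k, map_add, map_mul]
      ring
    next h =>
      have hn : n ≤ i := le_of_not_gt h
      have he : Ep n (k + 1) i = Ep n (k + 1) n := by
        rw [Ep, Ep, lowSet_of_le n hn, lowSet_of_le n le_rfl]
      have hz : Ideal.Quotient.mk (I n) (Ep n (k + 1) n) = 0 := by
        by_cases hkn : k + 1 ≤ n
        · rw [Ep_n, Ideal.Quotient.eq_zero_iff_mem]
          exact esymm_mem_I n (by omega) hkn
        · rw [Ep_top n (by omega), map_zero]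
      rw [map_zero, he, hz, mul_zero]
  termination_by k i => (k, n - i)
  decreasing_by
  · exact Prod.Lex.left _ _ (Nat.lt_succ_self k)
  · exact Prod.Lex.right _ (by omega)

lemma Hp_mem {k i : ℕ} (hik : i < k) : Hp n k i ∈ I n := by
  rw [← Ideal.Quotient.eq_zero_iff_mem, Hp_mk, Ep_top n hik, map_zero, mul_zero]


lemma sum_univ_add (a b : Fin n →₀ ℕ) (c : Fin n → ℕ) :
    ∑ j : Fin n, (a + b) j * c j = (∑ j : Fin n, a j * c j) + ∑ j : Fin n, b j * c j := by
  rw [← Finset.sum_add_distrib]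
  exact Finset.sum_congr rfl fun j _ => by rw [Finsupp.add_apply, add_mul]

lemma sum_univ_single (i : Fin n) (k : ℕ) (c : Fin n → ℕ) :
    ∑ j : Fin n, (Finsupp.single i k) j * c j = k * c i := by
  classical
  rw [Finset.sum_eq_single i]
  · rw [Finsupp.single_eq_same]
  · intro j _ hj
    rw [Finsupp.single_eq_of_ne' (Ne.symm hj), zero_mul]
  · intro h; exact absurd (Finset.mem_univ i) h

lemma degree_eq_sum_univ (a : Fin n →₀ ℕ) : a.degree = ∑ j : Fin n, a j := by
  rw [Finsupp.degree]
  exact Finset.sum_subset (Finset.subset_univ _)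
    (fun j _ hj => Finsupp.notMem_support_iff.1 hj)

lemma nat_key {c k m : ℕ} (hc : c < k) (hm : 1 ≤ m) :
    c * m + (k - c) * (m - 1) < k * m := by
  obtain ⟨c', hc'⟩ : ∃ c', k = c + c' + 1 := ⟨k - c - 1, by omega⟩
  obtain ⟨m', hm'⟩ : ∃ m', m = m' + 1 := ⟨m - 1, by omega⟩
  subst hc' hm'
  have h1 : c + c' + 1 - c = c' + 1 := by omega
  have h2 : m' + 1 - 1 = m' := by omega
  rw [h1, h2]
  nlinarith


lemma monomial_zero : ∀ (W : ℕ) (a : Fin n →₀ ℕ),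
    n * (n - 1) / 2 < ∑ j : Fin n, a j →
    (∑ j : Fin n, a j * (n - (j : ℕ))) ≤ W →
    Ideal.Quotient.mk (I n) (monomial a 1) = 0 := by
  intro W
  induction W with
  | zero =>
    intro a hdeg hw
    exfalso
    have hz : ∀ j : Fin n, a j = 0 := by
      intro j
      have h1 : a j * (n - (j : ℕ)) = 0 :=
        Finset.sum_eq_zero_iff.1 (Nat.le_zero.1 hw) j (Finset.mem_univ j)
      have h2 := j.isLt
      rcases Nat.mul_eq_zero.1 h1 with h | h
      · exact h
      · omega
    rw [Finset.sum_eq_zero (fun j _ => hz j)] at hdeg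
    omega
  | succ W IH =>
    intro a hdeg hw
    by_cases hex : ∃ i : Fin n, (i : ℕ) + 1 ≤ a i
    case neg =>
      exfalso
      push_neg at hex
      have hle : ∑ j : Fin n, a j ≤ ∑ j : Fin n, (j : ℕ) :=
        Finset.sum_le_sum fun j _ => by have := hex j; omega
      have hsum : (∑ j : Fin n, (j : ℕ)) = n * (n - 1) / 2 := by
        rw [Fin.sum_univ_eq_sum_range (fun i => i) n]
        have := Finset.sum_range_id_mul_two n
        omega
      omega
    obtain ⟨i, hi⟩ := hex
    set k := (i : ℕ) + 1 with hk
    have hfin : (i : ℕ) < n := i.isLt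
    have hieta : (⟨(i : ℕ), hfin⟩ : Fin n) = i := rfl
    set δ : Fin n →₀ ℕ := Finsupp.single i k with hδ
    have hδle : δ ≤ a := Finsupp.single_le_iff.2 hi
    set a' := a - δ with ha'
    have haa : a' + δ = a := tsub_add_cancel_of_le hδle
    set G := Hp n k (i : ℕ) - X i ^ k with hG
    have hHpmk : Ideal.Quotient.mk (I n) (Hp n k (i : ℕ)) = 0 :=
      (Ideal.Quotient.eq_zero_iff_mem).2 (Hp_mem n (by omega))
    have hXpk : Ideal.Quotient.mk (I n) (X i ^ k) = - Ideal.Quotient.mk (I n) G := by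
      rw [hG, map_sub, hHpmk, zero_sub, neg_neg]
    have hsplit : Ideal.Quotient.mk (I n) (monomial a 1)
        = - Ideal.Quotient.mk (I n) (monomial a' 1 * G) := by
      have h1 : monomial a (1 : ℤ) = monomial a' 1 * X i ^ k := by
        rw [X_pow_eq_monomial, monomial_mul, one_mul, haa]
      rw [h1, map_mul, hXpk, map_mul]
      ring
    rw [hsplit, neg_eq_zero]
    rw [as_sum G, Finset.mul_sum, map_sum]
    apply Finset.sum_eq_zero
    intro b hb
    have hbG : coeff b G ≠ 0 := mem_support_iff.1 hb
    -- b ≠ δ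
    have hne : b ≠ δ := by
      rintro rfl
      apply hbG
      rw [hG, coeff_sub, X_pow_eq_monomial, coeff_monomial, if_pos rfl]
      have := Hp_coeff_single n hfin k
      rw [hieta] at this
      rw [this]
      ring
    have hbHp : coeff b (Hp n k (i : ℕ)) ≠ 0 := by
      intro h
      apply hbG
      rw [hG, coeff_sub, h, X_pow_eq_monomial, coeff_monomial, if_neg (fun h' => hne h'.symm)]
      ring
    have hbdeg : ∑ j : Fin n, b j = k := by
      rw [← degree_eq_sum_univ]
      by_contra h
      exact hbHp ((Hp_isHomogeneous n k (i : ℕ)).coeff_eq_zero h)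
    have hlow : ∀ j : Fin n, (j : ℕ) < (i : ℕ) → b j = 0 := by
      intro j hj
      by_contra h
      exact hbHp (coeff_Hp_eq_zero n hj h)
    have hbi : b i < k := by
      have hbik : b i ≤ k := hbdeg ▸ Finset.single_le_sum
        (f := fun j : Fin n => b j) (fun j _ => Nat.zero_le _) (Finset.mem_univ i)
      rcases lt_or_eq_of_le hbik with h | h
      · exact h
      · exfalso
        apply hne
        have herase : ∑ j ∈ Finset.univ.erase i, b j = 0 := by
          have h0 : b i + ∑ j ∈ Finset.univ.erase i, b j = ∑ j : Fin n, b j :=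
            Finset.add_sum_erase Finset.univ (fun j : Fin n => b j) (Finset.mem_univ i)
          omega
        ext j
        by_cases hji : j = i
        · subst hji; rw [hδ, Finsupp.single_eq_same, h]
        · rw [hδ, Finsupp.single_eq_of_ne' (fun h' => hji h'.symm)]
          exact Finset.sum_eq_zero_iff.1 herase j (Finset.mem_erase.2 ⟨hji, Finset.mem_univ j⟩)
    -- reduce the term
    have hterm : monomial a' (1 : ℤ) * monomial b (coeff b G)
        = C (coeff b G) * monomial (a' + b) 1 := by
      rw [monomial_mul, one_mul, C_mul_monomial, mul_one]
    rw [hterm, map_mul]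
    have hzero : Ideal.Quotient.mk (I n) (monomial (a' + b) (1 : ℤ)) = 0 := by
      apply IH
      · -- degree unchanged
        have h1 : ∑ j : Fin n, (a' + δ) j = (∑ j : Fin n, a' j) + ∑ j : Fin n, δ j :=
          by simpa using sum_univ_add n a' δ (fun _ => 1)
        have h2 : ∑ j : Fin n, δ j = k := by
          rw [hδ]
          have h0 := sum_univ_single n i k (fun _ => 1)
          simp only [mul_one] at h0
          exact h0
        have h3 : ∑ j : Fin n, (a' + b) j = (∑ j : Fin n, a' j) + ∑ j : Fin n, b j := by
          simpa using sum_univ_add n a' b (fun _ => 1)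
        rw [haa] at h1
        omega
      · -- weight decreases
        have h1 : (∑ j : Fin n, a' j * (n - (j : ℕ))) + ∑ j : Fin n, δ j * (n - (j : ℕ))
            = ∑ j : Fin n, a j * (n - (j : ℕ)) := by
          rw [← Finset.sum_add_distrib]
          refine Finset.sum_congr rfl fun j _ => ?_
          rw [← add_mul, ← Finsupp.add_apply, haa]
        have h2 : ∑ j : Fin n, δ j * (n - (j : ℕ)) = k * (n - (i : ℕ)) := by
          rw [hδ]
          exact sum_univ_single n i k (fun j => n - (j : ℕ))
        have h3 : ∑ j : Fin n, (a' + b) j * (n - (j : ℕ))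
            = (∑ j : Fin n, a' j * (n - (j : ℕ))) + ∑ j : Fin n, b j * (n - (j : ℕ)) := by
          rw [← Finset.sum_add_distrib]
          refine Finset.sum_congr rfl fun j _ => ?_
          rw [← add_mul, ← Finsupp.add_apply]
        have hwb : ∑ j : Fin n, b j * (n - (j : ℕ)) < k * (n - (i : ℕ)) := by
          have he1 : b i * (n - (i : ℕ)) + ∑ j ∈ Finset.univ.erase i, b j * (n - (j : ℕ))
              = ∑ j : Fin n, b j * (n - (j : ℕ)) :=
            Finset.add_sum_erase Finset.univ (fun j : Fin n => b j * (n - (j : ℕ)))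
              (Finset.mem_univ i)
          have he2 : b i + ∑ j ∈ Finset.univ.erase i, b j = k := by
            have h0 : b i + ∑ j ∈ Finset.univ.erase i, b j = ∑ j : Fin n, b j :=
              Finset.add_sum_erase Finset.univ (fun j : Fin n => b j) (Finset.mem_univ i)
            omega
          have hbnd : ∑ j ∈ Finset.univ.erase i, b j * (n - (j : ℕ))
              ≤ ∑ j ∈ Finset.univ.erase i, b j * (n - (i : ℕ) - 1) := by
            apply Finset.sum_le_sum
            intro j hj
            have hji : j ≠ i := (Finset.mem_erase.1 hj).1
            by_cases hbj : b j = 0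
            · rw [hbj]; simp
            · have hij : (i : ℕ) ≤ (j : ℕ) := by
                by_contra h'
                exact hbj (hlow j (by omega))
              have hij' : (i : ℕ) < (j : ℕ) := by
                rcases lt_or_eq_of_le hij with h' | h'
                · exact h'
                · exact absurd (Fin.ext h'.symm) hji
              exact Nat.mul_le_mul_left _ (by omega)
          have hsum2 : ∑ j ∈ Finset.univ.erase i, b j * (n - (i : ℕ) - 1)
              = (k - b i) * (n - (i : ℕ) - 1) := by
            rw [← Finset.sum_mul]
            congr 1
            omega
          have := nat_key (c := b i) (k := k) (m := n - (i : ℕ)) hbi (by omega)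
          omega
        omega
    rw [hzero, mul_zero]

end Stmt10Aux


open Stmt10Aux in
/-- In the coinvariant algebra `ℤ[x₁,…,xₙ]/(e₁,…,eₙ)` (the cohomology of the
complete complex flag manifold `Fl(ℂⁿ)`), every homogeneous element of degree
`> n(n-1)/2` (standard grading `deg xᵢ = 1`) vanishes. -/
theorem stmt10 (n : ℕ) (p : MvPolynomial (Fin n) ℤ) (d : ℕ)
    (hp : p.IsHomogeneous d) (hd : n * (n - 1) / 2 < d) :
    Ideal.Quotient.mk
      (Ideal.span (Set.range fun j : Fin n => esymm (Fin n) ℤ ((j : ℕ) + 1))) p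
      = 0 := by
  show Ideal.Quotient.mk (I n) p = 0
  rw [as_sum p, map_sum]
  apply Finset.sum_eq_zero
  intro b hb
  have hcoeff : coeff b p ≠ 0 := mem_support_iff.1 hb
  have hdeg : b.degree = d := by
    by_contra h
    exact hcoeff (hp.coeff_eq_zero h)
  have h1 : monomial b (coeff b p) = C (coeff b p) * monomial b 1 := by
    rw [C_mul_monomial, mul_one]
  rw [h1, map_mul, monomial_zero n (∑ j : Fin n, b j * (n - (j : ℕ))) b ?_ le_rfl, mul_zero]
  rw [← degree_eq_sum_univ n b, hdeg]
  exact hd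
end

section
/- Let R be a commutative ring and v₁, …, vₙ ∈ R. In the polynomial ring R[e₁, …, eₙ], let I be the ideal generated by the n elements σⱼ(e₁², …, eₙ²) − vⱼ for j = 1, …, n (where σⱼ denotes the j-th elementary symmetric polynomial). Then R[e₁,…,eₙ]/I is a free R-module of rank 2ⁿ·n!. -/
open MvPolynomial

/-- The ideal of `R[e₁,…,eₙ]` generated by `σⱼ(e₁²,…,eₙ²) - vⱼ`, `j = 1,…,n`. -/
noncomputable def orFlagBundleIdeal (R : Type*) [CommRing R] (n : ℕ)
    (v : Fin n → R) : Ideal (MvPolynomial (Fin n) R) :=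
  Ideal.span (Set.range fun j : Fin n =>
    (aeval fun i : Fin n => (X i : MvPolynomial (Fin n) R) ^ 2)
      (esymm (Fin n) R ((j : ℕ) + 1)) - C (v j))

universe u
noncomputable section

lemma ms_esymm_cons {A : Type*} [CommRing A] (a : A) (s : Multiset A) (k : ℕ) :
    (a ::ₘ s).esymm (k + 1) = s.esymm (k + 1) + a * s.esymm k := by
  simp only [Multiset.esymm, Multiset.powersetCard_cons, Multiset.map_add, Multiset.sum_add,
    Multiset.map_map, Function.comp_def, Multiset.prod_cons]
  rw [Multiset.sum_map_mul_left]

lemma univ_val_succ (n : ℕ) :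
    (Finset.univ : Finset (Fin (n + 1))).val
      = (0 : Fin (n+1)) ::ₘ (Finset.univ : Finset (Fin n)).val.map Fin.succ := by
  rw [Fin.univ_succ, Finset.cons_val, Finset.map_val]
  rfl

lemma esymm_eval_succ {A T : Type*} [CommRing A] [CommRing T] [Algebra A T]
    {m : ℕ} (y : Fin (m + 1) → T) (k : ℕ) :
    aeval y (esymm (Fin (m + 1)) A (k + 1))
      = aeval (y ∘ Fin.succ) (esymm (Fin m) A (k + 1))
        + y 0 * aeval (y ∘ Fin.succ) (esymm (Fin m) A k) := by
  rw [aeval_esymm_eq_multiset_esymm, aeval_esymm_eq_multiset_esymm,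
    aeval_esymm_eq_multiset_esymm, univ_val_succ]
  rw [Multiset.map_cons, ms_esymm_cons]
  simp [Multiset.map_map, Function.comp_def]

variable {A : Type u} [CommRing A] {m : ℕ}

def wnat (w : Fin (m+1) → A) : ℕ → A := fun j => if h : j < m + 1 then w ⟨j, h⟩ else 0

noncomputable def cpo (w : ℕ → A) : ℕ → Polynomial A
  | 0 => 1
  | j + 1 => Polynomial.C (w j) - Polynomial.X ^ 2 * cpo w j

def gp (w : Fin (m+1) → A) : Polynomial A := (-1) ^ (m+1) * cpo (wnat w) (m+1)

def vB (w : Fin (m+1) → A) : Fin m → AdjoinRoot (gp w) :=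
  fun j => AdjoinRoot.mk (gp w) (cpo (wnat w) ((j : ℕ) + 1))

section Elements
variable (w : Fin (m+1) → A)

def sig (A : Type u) [CommRing A] (m : ℕ) (k : ℕ) : MvPolynomial (Fin (m+1)) A :=
  aeval (fun i : Fin m => (X (Fin.succ i) : MvPolynomial (Fin (m+1)) A) ^ 2) (esymm (Fin m) A k)

def HK (w : Fin (m+1) → A) (k : ℕ) : MvPolynomial (Fin (m+1)) A :=
  sig A m k - Polynomial.aeval (X 0 : MvPolynomial (Fin (m+1)) A) (cpo (wnat w) k)

def Ggen (w : Fin (m+1) → A) (j : Fin (m+1)) : MvPolynomial (Fin (m+1)) A :=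
  (aeval fun i : Fin (m+1) => (X i : MvPolynomial (Fin (m+1)) A) ^ 2)
    (esymm (Fin (m+1)) A ((j : ℕ) + 1)) - C (w j)

lemma HK_zero : HK w 0 = 0 := by
  simp [HK, sig, cpo, esymm_zero]

lemma esymm_eval_succ' (k : ℕ) :
    (aeval fun i : Fin (m+1) => (X i : MvPolynomial (Fin (m+1)) A) ^ 2)
        (esymm (Fin (m+1)) A (k + 1))
      = sig A m (k+1) + (X 0 : MvPolynomial (Fin (m+1)) A) ^ 2 * sig A m k := by
  exact esymm_eval_succ (fun i : Fin (m+1) => (X i : MvPolynomial (Fin (m+1)) A) ^ 2) k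

lemma Ggen_eq (j : Fin (m+1)) :
    Ggen w j = HK w ((j : ℕ) + 1) + (X 0 : MvPolynomial (Fin (m+1)) A) ^ 2 * HK w (j : ℕ) := by
  have h1 := esymm_eval_succ' (A := A) (m := m) (j : ℕ)
  have h2 : (cpo (wnat w) ((j:ℕ)+1) : Polynomial A)
      = Polynomial.C (w j) - Polynomial.X ^ 2 * cpo (wnat w) (j : ℕ) := by
    show Polynomial.C (wnat w (j:ℕ)) - _ = _
    rw [wnat, dif_pos j.isLt]
  have h3 : Polynomial.aeval (X 0 : MvPolynomial (Fin (m+1)) A) (cpo (wnat w) ((j:ℕ)+1))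
      = C (w j) - (X 0 : MvPolynomial (Fin (m+1)) A)^2
          * Polynomial.aeval (X 0 : MvPolynomial (Fin (m+1)) A) (cpo (wnat w) (j : ℕ)) := by
    rw [h2, map_sub, map_mul, map_pow, Polynomial.aeval_X, Polynomial.aeval_C,
      MvPolynomial.algebraMap_eq]
  rw [Ggen, HK, HK, h1, h3]
  ring

/-- span equality in the big polynomial ring -/
lemma span_Ggen_eq_span_HK :
    Ideal.span (Set.range (Ggen w))
      = Ideal.span (Set.range fun j : Fin (m+1) => HK w ((j : ℕ) + 1)) := by
  apply le_antisymm
  · rw [Ideal.span_le]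
    rintro _ ⟨j, rfl⟩
    rw [Ggen_eq]
    have mem1 : HK w ((j:ℕ)+1) ∈ Ideal.span (Set.range fun j : Fin (m+1) => HK w ((j:ℕ)+1)) :=
      Ideal.subset_span ⟨j, rfl⟩
    have mem2 : HK w (j:ℕ) ∈ Ideal.span (Set.range fun j : Fin (m+1) => HK w ((j:ℕ)+1)) := by
      rcases Nat.eq_zero_or_eq_succ_pred (j : ℕ) with h | h
      · rw [h, HK_zero]; exact Ideal.zero_mem _
      · rw [h]
        exact Ideal.subset_span ⟨⟨(j:ℕ) - 1, lt_of_le_of_lt (Nat.pred_le _) j.isLt⟩, rfl⟩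
    exact Ideal.add_mem _ mem1 (Ideal.mul_mem_left _ _ mem2)
  · rw [Ideal.span_le]
    rintro _ ⟨j, rfl⟩
    simp only [SetLike.mem_coe]
    have key : ∀ k : ℕ, k < m + 1 → HK w (k + 1) ∈ Ideal.span (Set.range (Ggen w)) := by
      intro k
      induction k with
      | zero =>
        intro h
        have := Ggen_eq w ⟨0, h⟩
        simp only [Fin.val_mk, Nat.cast_zero, HK_zero, mul_zero, add_zero, zero_add] at this
        rw [← this]
        exact Ideal.subset_span ⟨⟨0, h⟩, rfl⟩
      | succ k ih =>
        intro h
        have hk : k < m + 1 := Nat.lt_of_succ_lt h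
        have := Ggen_eq w ⟨k + 1, h⟩
        have : HK w (k + 1 + 1) = Ggen w ⟨k+1, h⟩
            - (X 0 : MvPolynomial (Fin (m+1)) A)^2 * HK w (k+1) := by
          rw [this]; ring
        rw [this]
        exact Ideal.sub_mem _ (Ideal.subset_span ⟨⟨k+1, h⟩, rfl⟩)
          (Ideal.mul_mem_left _ _ (ih hk))
    exact key j j.isLt

end Elements

lemma map_aeval_esymm_sq {R S : Type*} [CommRing R] [CommRing S] (f : R →+* S) (m k : ℕ) :
    MvPolynomial.map f ((aeval fun i : Fin m => (X i : MvPolynomial (Fin m) R) ^ 2)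
        (esymm (Fin m) R k))
      = (aeval fun i : Fin m => (X i : MvPolynomial (Fin m) S) ^ 2) (esymm (Fin m) S k) := by
  rw [← map_esymm (σ := Fin m) (n := k) (f := f), aeval_def, aeval_def, MvPolynomial.algebraMap_eq,
    MvPolynomial.algebraMap_eq, map_eval₂]
  congr 1
  funext i
  simp

/-- base-change bridge for esymm evaluated at squares -/
lemma aeval_esymm_base {R S : Type*} [CommRing R] [CommRing S] [Algebra R S] (m k : ℕ) :
    (aeval fun i : Fin m => (X i : MvPolynomial (Fin m) S) ^ 2) (esymm (Fin m) R k)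
      = (aeval fun i : Fin m => (X i : MvPolynomial (Fin m) S) ^ 2) (esymm (Fin m) S k) := by
  rw [← map_esymm (σ := Fin m) (n := k) (f := algebraMap R S), aeval_map_algebraMap]

noncomputable def EE (A : Type u) [CommRing A] (m : ℕ) :
    MvPolynomial (Fin (m+1)) A ≃ₐ[A] MvPolynomial (Fin m) (Polynomial A) :=
  (renameEquiv A (_root_.finSuccEquiv m)).trans (optionEquivRight A (Fin m))

variable {A : Type u} [CommRing A] {m : ℕ}

lemma EE_X_zero : EE A m (X 0) = C Polynomial.X := by
  simp [EE, finSuccEquiv_zero, optionEquivRight_X_none]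

lemma EE_X_succ (i : Fin m) : EE A m (X i.succ) = X i := by
  simp [EE, finSuccEquiv_succ, optionEquivRight_X_some]

lemma EE_aeval_poly (q : Polynomial A) :
    EE A m (Polynomial.aeval (X 0 : MvPolynomial (Fin (m+1)) A) q) = C q := by
  rw [← Polynomial.aeval_algHom_apply (EE A m) (X 0) q, EE_X_zero]
  have h := Polynomial.aeval_algHom_apply
    (IsScalarTower.toAlgHom A (Polynomial A) (MvPolynomial (Fin m) (Polynomial A)))
    Polynomial.X q
  simpa [MvPolynomial.algebraMap_eq, Polynomial.aeval_X_left_apply] using h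

section Step
variable (w : Fin (m+1) → A)

def mkA : Polynomial A →ₐ[A] AdjoinRoot (gp w) :=
  { AdjoinRoot.mk (gp w) with
    commutes' := fun a => rfl }

def Phi : MvPolynomial (Fin m) (Polynomial A) →ₐ[A] MvPolynomial (Fin m) (AdjoinRoot (gp w)) :=
  MvPolynomial.mapAlgHom (mkA w)

def hgenP (k : ℕ) : MvPolynomial (Fin m) (Polynomial A) :=
  (aeval fun i : Fin m => (X i : MvPolynomial (Fin m) (Polynomial A)) ^ 2)
    (esymm (Fin m) (Polynomial A) (k+1)) - C (cpo (wnat w) (k+1))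

lemma EE_sig (k : ℕ) : EE A m (sig A m k)
    = (aeval fun i : Fin m => (X i : MvPolynomial (Fin m) (Polynomial A)) ^ 2)
        (esymm (Fin m) (Polynomial A) k) := by
  rw [sig]
  have h := comp_aeval_apply (f := fun i : Fin m => (X (Fin.succ i) : MvPolynomial (Fin (m+1)) A) ^ 2)
    (EE A m).toAlgHom (esymm (Fin m) A k)
  simp only [AlgEquiv.coe_algHom] at h
  rw [h]
  rw [show (fun i : Fin m => EE A m ((X (Fin.succ i) : MvPolynomial (Fin (m+1)) A) ^ 2))
      = fun i : Fin m => (X i : MvPolynomial (Fin m) (Polynomial A)) ^ 2 by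
    funext i; rw [map_pow, EE_X_succ]]
  rw [aeval_esymm_base]

lemma EE_HK (k : ℕ) : EE A m (HK w (k+1)) = hgenP w k := by
  rw [HK, map_sub, EE_sig, EE_aeval_poly, hgenP]

lemma map_EE_orFlag :
    Ideal.map (EE A m) (orFlagBundleIdeal A (m+1) w)
      = Ideal.span (Set.range fun j : Fin (m+1) => hgenP w (j : ℕ)) := by
  have : orFlagBundleIdeal A (m+1) w = Ideal.span (Set.range (Ggen w)) := rfl
  rw [this, span_Ggen_eq_span_HK, Ideal.map_span, ← Set.range_comp]
  rw [show (⇑(EE A m) ∘ fun j : Fin (m+1) => HK w ((j:ℕ)+1))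
      = fun j : Fin (m+1) => hgenP w (j:ℕ) from funext fun j => by rw [Function.comp_apply, EE_HK]]

lemma esymm_eq_zero_big {R : Type*} [CommRing R] (mm k : ℕ) (h : mm < k) :
    esymm (Fin mm) R k = 0 := by
  rw [esymm]
  have : (Finset.univ : Finset (Fin mm)).powersetCard k = ∅ :=
    Finset.powersetCard_eq_empty.2 (by simpa using h)
  rw [this, Finset.sum_empty]

lemma hgenP_last : hgenP w m = - C (cpo (wnat w) (m+1)) := by
  rw [hgenP, esymm_eq_zero_big m (m+1) (lt_add_one m), map_zero, zero_sub]

lemma span_split :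
    Ideal.span (Set.range fun j : Fin (m+1) => hgenP w (j:ℕ))
      = Ideal.span (Set.range fun j : Fin m => hgenP w (j:ℕ))
          ⊔ Ideal.span {(C (gp w) : MvPolynomial (Fin m) (Polynomial A))} := by
  have hrange : (Set.range fun j : Fin (m+1) => hgenP w (j:ℕ))
      = (Set.range fun j : Fin m => hgenP w (j:ℕ)) ∪ {hgenP w m} := by
    ext x
    constructor
    · rintro ⟨j, rfl⟩
      by_cases hj : (j : ℕ) < m
      · exact Or.inl ⟨⟨(j:ℕ), hj⟩, rfl⟩
      · have hjm : (j : ℕ) = m := by omega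
        right
        show hgenP w (j:ℕ) ∈ ({hgenP w m} : Set _)
        rw [hjm]
        exact Set.mem_singleton _
    · rintro (⟨j, rfl⟩ | h)
      · exact ⟨⟨(j:ℕ), by omega⟩, rfl⟩
      · rw [Set.mem_singleton_iff] at h
        rw [h]
        exact ⟨⟨m, by omega⟩, rfl⟩
  rw [hrange, Ideal.span_union]
  congr 1
  have hCgp : (C (gp w) : MvPolynomial (Fin m) (Polynomial A))
      = (-1) ^ (m+1) * C (cpo (wnat w) (m+1)) := by
    rw [gp, map_mul, map_pow, map_neg, map_one]
  have h2 : ((-1 : MvPolynomial (Fin m) (Polynomial A))) ^ m * (-1) ^ m = 1 := by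
    rw [← pow_add, ← two_mul, pow_mul]
    norm_num
  have e1 : (C (gp w) : MvPolynomial (Fin m) (Polynomial A))
      = -C (cpo (wnat w) (m+1)) * (-1) ^ m := by
    rw [hCgp, pow_succ]
    ring
  have e2 : (-C (cpo (wnat w) (m+1)) : MvPolynomial (Fin m) (Polynomial A))
      = C (gp w) * (-1) ^ m := by
    rw [e1, mul_assoc, h2, mul_one]
  apply le_antisymm <;> rw [Ideal.span_singleton_le_span_singleton]
  · exact ⟨(-1) ^ m, by rw [hgenP_last]; exact e2⟩
  · exact ⟨(-1) ^ m, by rw [hgenP_last]; exact e1⟩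

lemma Phi_hgenP (j : Fin m) :
    Phi w (hgenP w (j : ℕ))
      = (aeval fun i : Fin m => (X i : MvPolynomial (Fin m) (AdjoinRoot (gp w))) ^ 2)
          (esymm (Fin m) (AdjoinRoot (gp w)) ((j:ℕ)+1)) - C (vB w j) := by
  rw [hgenP, map_sub]
  congr 1
  · exact map_aeval_esymm_sq ((mkA w) : Polynomial A →+* AdjoinRoot (gp w)) m ((j:ℕ)+1)
  · show MvPolynomial.map ((mkA w) : Polynomial A →+* AdjoinRoot (gp w)) (C _) = _
    rw [MvPolynomial.map_C]
    rfl

lemma orFlagB_eq_map :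
    orFlagBundleIdeal (AdjoinRoot (gp w)) m (vB w)
      = Ideal.map (Phi w) (Ideal.span (Set.range fun j : Fin m => hgenP w (j:ℕ))) := by
  rw [Ideal.map_span, ← Set.range_comp, orFlagBundleIdeal]
  rw [show (⇑(Phi w) ∘ fun j : Fin m => hgenP w (j:ℕ))
      = fun j : Fin m => (aeval fun i : Fin m =>
          (X i : MvPolynomial (Fin m) (AdjoinRoot (gp w))) ^ 2)
        (esymm (Fin m) (AdjoinRoot (gp w)) ((j:ℕ)+1)) - C (vB w j)
      from funext fun j => Phi_hgenP w j]

lemma Phi_surj : Function.Surjective (Phi w) :=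
  MvPolynomial.map_surjective _ AdjoinRoot.mk_surjective

lemma ker_Phi : RingHom.ker (Phi w) = Ideal.span {(C (gp w) : MvPolynomial (Fin m) (Polynomial A))} := by
  rw [show RingHom.ker (Phi w) = RingHom.ker (MvPolynomial.mapAlgHom (σ := Fin m) (mkA w)) from rfl,
    MvPolynomial.ker_mapAlgHom]
  rw [show RingHom.ker (mkA w) = Ideal.span {gp w} from Ideal.mk_ker]
  rw [Ideal.map_span, Set.image_singleton]

lemma comap_Phi :
    Ideal.comap (Phi w) (orFlagBundleIdeal (AdjoinRoot (gp w)) m (vB w))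
      = Ideal.span (Set.range fun j : Fin (m+1) => hgenP w (j:ℕ)) := by
  rw [orFlagB_eq_map, Ideal.comap_map_of_surjective _ (Phi_surj w), span_split]
  congr 1
  exact ker_Phi w

def Psi : MvPolynomial (Fin (m+1)) A
    →ₐ[A] (MvPolynomial (Fin m) (AdjoinRoot (gp w))
      ⧸ orFlagBundleIdeal (AdjoinRoot (gp w)) m (vB w)) :=
  ((Ideal.Quotient.mkₐ A (orFlagBundleIdeal (AdjoinRoot (gp w)) m (vB w))).comp
    (Phi w)).comp (EE A m).toAlgHom

lemma Psi_surj : Function.Surjective (Psi w) := by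
  simp only [Psi, AlgHom.coe_comp, AlgEquiv.toAlgHom_eq_coe, AlgHom.coe_coe]
  exact (Ideal.Quotient.mkₐ_surjective A _).comp ((Phi_surj w).comp (EE A m).surjective)

lemma ker_Psi : RingHom.ker (Psi w) = orFlagBundleIdeal A (m+1) w := by
  ext x
  rw [RingHom.mem_ker]
  rw [show Psi w x = Ideal.Quotient.mk _ (Phi w (EE A m x)) from rfl]
  rw [Ideal.Quotient.eq_zero_iff_mem, ← Ideal.mem_comap, comap_Phi, ← map_EE_orFlag,
    Ideal.mem_map_of_equiv]
  constructor
  · rintro ⟨y, hy, hxy⟩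
    rwa [← (EE A m).injective hxy]
  · intro hx
    exact ⟨x, hx, rfl⟩

noncomputable def stepEquiv :
    (MvPolynomial (Fin (m+1)) A ⧸ orFlagBundleIdeal A (m+1) w)
      ≃ₐ[A] (MvPolynomial (Fin m) (AdjoinRoot (gp w))
        ⧸ orFlagBundleIdeal (AdjoinRoot (gp w)) m (vB w)) :=
  (Ideal.quotientEquivAlgOfEq A (ker_Psi w).symm).trans
    (Ideal.quotientKerAlgEquivOfSurjective (Psi_surj w))

end Step

lemma cpo_monic [Nontrivial A] (w : ℕ → A) (j : ℕ) :
    ((-1 : Polynomial A) ^ j * cpo w j).Monic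
      ∧ ((-1 : Polynomial A) ^ j * cpo w j).natDegree = 2 * j := by
  induction j with
  | zero => simp [cpo]
  | succ j ih =>
    have key : (-1 : Polynomial A) ^ (j+1) * cpo w (j+1)
        = Polynomial.X ^ 2 * ((-1 : Polynomial A)^j * cpo w j)
          + Polynomial.C (-(-1:A)^j * w j) := by
      simp only [cpo]
      rw [map_mul, map_neg, map_pow, map_neg, map_one]
      ring
    have hm : (Polynomial.X ^ 2 * ((-1 : Polynomial A)^j * cpo w j)).Monic :=
      (Polynomial.monic_X_pow 2).mul ih.1
    have hd : (Polynomial.X ^ 2 * ((-1 : Polynomial A)^j * cpo w j)).natDegree = 2 * (j+1) := by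
      rw [(Polynomial.monic_X_pow 2).natDegree_mul ih.1, ih.2, Polynomial.natDegree_X_pow]
      ring
    have hlt : (Polynomial.C (-(-1:A)^j * w j)).degree
        < (Polynomial.X ^ 2 * ((-1 : Polynomial A)^j * cpo w j)).degree := by
      refine lt_of_le_of_lt Polynomial.degree_C_le ?_
      rw [Polynomial.degree_eq_natDegree hm.ne_zero, hd]
      exact_mod_cast Nat.succ_pos _
    constructor
    · rw [key]; exact hm.add_of_left hlt
    · rw [key, Polynomial.natDegree_add_eq_left_of_degree_lt hlt, hd]

lemma gp_monic [Nontrivial A] (w : Fin (m+1) → A) :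
    (gp w).Monic ∧ (gp w).natDegree = 2 * (m+1) :=
  cpo_monic (wnat w) (m+1)

/-- a basis with arbitrary index for a trivial module over a trivial ring -/
noncomputable def basisOfSubsingleton {ι R M : Type*} [Semiring R] [Subsingleton R]
    [AddCommMonoid M] [Module R M] [Subsingleton M] : Module.Basis ι R M :=
  .ofRepr
  { toFun := fun _ => 0
    map_add' := by intros; simp
    map_smul' := by intros; simp
    invFun := fun _ => 0
    left_inv := fun x => Subsingleton.elim _ _
    right_inv := fun x => Finsupp.ext fun i => Subsingleton.elim _ _ }

theorem key : ∀ (m : ℕ) (A : Type u) [CommRing A] (w : Fin m → A),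
    Nonempty (Module.Basis (Fin (2 ^ m * Nat.factorial m)) A
      (MvPolynomial (Fin m) A ⧸ orFlagBundleIdeal A m w)) := by
  intro m
  induction m with
  | zero =>
    intro A _ w
    have hbot : orFlagBundleIdeal A 0 w = ⊥ := by
      rw [orFlagBundleIdeal, Set.range_eq_empty, Ideal.span_empty]
    have hker : orFlagBundleIdeal A 0 w
        = RingHom.ker ((isEmptyAlgEquiv A (Fin 0)).toAlgHom) := by
      rw [hbot]
      exact (RingHom.ker_coe_equiv (isEmptyAlgEquiv A (Fin 0)).toRingEquiv).symm
    have hsurj : Function.Surjective ((isEmptyAlgEquiv A (Fin 0)).toAlgHom) :=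
      (isEmptyAlgEquiv A (Fin 0)).surjective
    let e : (MvPolynomial (Fin 0) A ⧸ orFlagBundleIdeal A 0 w) ≃ₐ[A] A :=
      (Ideal.quotientEquivAlgOfEq A hker).trans
        (Ideal.quotientKerAlgEquivOfSurjective hsurj)
    exact ⟨((Module.Basis.singleton (Fin 1) A).reindex
      (finCongr (show 1 = 2^0 * Nat.factorial 0 by norm_num))).map e.symm.toLinearEquiv⟩
  | succ m ih =>
    intro A _ w
    rcases subsingleton_or_nontrivial A with hss | hnt
    · haveI : Subsingleton (MvPolynomial (Fin (m+1)) A ⧸ orFlagBundleIdeal A (m+1) w) :=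
        Function.Surjective.subsingleton Ideal.Quotient.mk_surjective
      exact ⟨basisOfSubsingleton⟩
    · obtain ⟨bQ⟩ := ih (AdjoinRoot (gp w)) (vB w)
      let pb := AdjoinRoot.powerBasis' (gp_monic w).1
      let bT := pb.basis.smulTower bQ
      have hdim : pb.dim = 2 * (m + 1) := (gp_monic w).2
      have harith : 2 * (m+1) * (2 ^ m * Nat.factorial m)
          = 2 ^ (m+1) * Nat.factorial (m+1) := by
        rw [Nat.factorial_succ, pow_succ]
        ring
      let eidx : Fin pb.dim × Fin (2 ^ m * Nat.factorial m)
          ≃ Fin (2 ^ (m+1) * Nat.factorial (m+1)) :=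
        (Equiv.prodCongr (finCongr hdim) (Equiv.refl _)).trans
          (finProdFinEquiv.trans (finCongr harith))
      exact ⟨(bT.reindex eidx).map (stepEquiv w).symm.toLinearEquiv⟩

end

/-- For any commutative ring `R` and `v₁,…,vₙ ∈ R`, the quotient
`R[e₁,…,eₙ]/(σⱼ(e₁²,…,eₙ²) - vⱼ, j = 1,…,n)` — the cohomology of the
complete even-rank oriented flag bundle `F̃l(V^{2n+1})` with `pⱼ(V) = vⱼ` —
is a free `R`-module of rank `2ⁿ · n!`. -/
theorem stmt16 (R : Type*) [CommRing R] (n : ℕ) (v : Fin n → R) :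
    Nonempty (Module.Basis (Fin (2 ^ n * n.factorial)) R
      (MvPolynomial (Fin n) R ⧸ orFlagBundleIdeal R n v)) := by
  exact key n R v
end
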